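/- Let v ∈ ℝᵐ and let v⁺ ∈ ℝᵐ be defined by v⁺_i = max(v_i, 0). If v⁺ ≠ 0, then the vector u* = v⁺/‖v⁺‖ minimizes the Euclidean distance ‖v − u‖ over the set {u ∈ ℝᵐ : u_i ≥ 0 for all i, and ‖u‖ = 1}; i.e. setting negative entries to zero and rescaling to unit norm projects onto the closest point satisfying both the nonnegativity and the unit-norm constraints. -/

import Mathlib

open BigOperators

/-- Rectifying and renormalizing projects onto the set of
nonnegative unit vectors: if `v⁺_i = max (v_i, 0)` and `v⁺ ≠ 0`, then
`u* = v⁺/‖v⁺‖` minimizes the Euclidean distance `‖v − u‖` over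
`{u : ∀ i, 0 ≤ u_i, ‖u‖ = 1}`. -/
theorem rectify_renormalize_is_projection
    {m : ℕ}
    (v : EuclideanSpace ℝ (Fin m))
    (vplus : EuclideanSpace ℝ (Fin m))
    (hvplus : ∀ i, vplus i = max (v i) 0)
    (hne : vplus ≠ 0)
    (uStar : EuclideanSpace ℝ (Fin m))
    (huStar : uStar = ‖vplus‖⁻¹ • vplus) :
    ∀ u : EuclideanSpace ℝ (Fin m), (∀ i, 0 ≤ u i) → ‖u‖ = 1 →
      ‖v - uStar‖ ≤ ‖v - u‖ := by
  intro u hu hun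
  have hnv : 0 < ‖vplus‖ := norm_pos_iff.mpr hne
  -- inner ℝ v vplus = ‖vplus‖^2
  have key : inner ℝ v vplus = (‖vplus‖ : ℝ) ^ 2 := by
    rw [← real_inner_self_eq_norm_sq]
    simp only [PiLp.inner_apply, RCLike.inner_apply, conj_trivial]
    apply Finset.sum_congr rfl
    intro i _
    rcases le_or_gt 0 (v i) with h | h
    · rw [hvplus i, max_eq_left h]
    · rw [hvplus i, max_eq_right h.le, mul_zero, zero_mul]
  have hstar : inner ℝ v uStar = (‖vplus‖ : ℝ) := by
    rw [huStar, real_inner_smul_right, key]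
    field_simp
  have hub : inner ℝ v u ≤ (‖vplus‖ : ℝ) := by
    have h1 : (inner ℝ v u : ℝ) ≤ inner ℝ vplus u := by
      simp only [PiLp.inner_apply, RCLike.inner_apply, conj_trivial]
      apply Finset.sum_le_sum
      intro i _
      apply mul_le_mul_of_nonneg_left _ (hu i)
      rw [hvplus i]; exact le_max_left _ _
    calc (inner ℝ v u : ℝ) ≤ inner ℝ vplus u := h1
      _ ≤ ‖vplus‖ * ‖u‖ := real_inner_le_norm _ _
      _ = ‖vplus‖ := by rw [hun, mul_one]
  have hustar : ‖uStar‖ = 1 := by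
    rw [huStar, norm_smul, norm_inv, norm_norm, inv_mul_cancel₀ hnv.ne']
  have e1 : ‖v - uStar‖ ^ 2 = ‖v‖ ^ 2 - 2 * inner ℝ v uStar + ‖uStar‖ ^ 2 :=
    norm_sub_sq_real v uStar
  have e2 : ‖v - u‖ ^ 2 = ‖v‖ ^ 2 - 2 * inner ℝ v u + ‖u‖ ^ 2 :=
    norm_sub_sq_real v u
  have hsq : ‖v - uStar‖ ^ 2 ≤ ‖v - u‖ ^ 2 := by
    rw [e1, e2, hustar, hun, hstar]
    linarith
  nlinarith [norm_nonneg (v - uStar), norm_nonneg (v - u)]
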